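/- Let $1 \le p \le q < s$, $1 \le r \le s$ and $T \in \mathcal{L}(U;X)$. Then $T$ is weakly anisotropic $(s,q,r;p)$-summing if and only if for every $x^* = (x_k^*)_{k=1}^\infty$ in the unit ball of $\ell_r(X^*)$, the composition $\Psi_{x^*} \circ T : U \to \ell_s$ is absolutely $(q,p)$-summing, where $\Psi_{x^*}(x) = (x_k^*(x))_{k=1}^\infty$. -/

import Mathlib

open scoped BigOperators NNReal ENNReal

noncomputable section

/-- `(xs k)` belongs to `ℓ_r(X*)`. -/
def MemLr (r : ℝ) {X : Type*} [NormedAddCommGroup X] [NormedSpace ℝ X]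
    (xs : ℕ → X →L[ℝ] ℝ) : Prop :=
  Summable fun k => ‖xs k‖ ^ r

/-- The `ℓ_r(X*)` norm. -/
noncomputable def lrNorm (r : ℝ) {X : Type*} [NormedAddCommGroup X] [NormedSpace ℝ X]
    (xs : ℕ → X →L[ℝ] ℝ) : ℝ :=
  (∑' k, ‖xs k‖ ^ r) ^ (1 / r)

/-- Weakly `q`-summable sequences. -/
def WeaklySummable (q : ℝ) {X : Type*} [NormedAddCommGroup X] [NormedSpace ℝ X]
    (x : ℕ → X) : Prop :=
  ∀ f : X →L[ℝ] ℝ, Summable fun j => |f (x j)| ^ q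

/-- The weak `ℓ_q` norm. -/
noncomputable def weakNorm (q : ℝ) {X : Type*} [NormedAddCommGroup X] [NormedSpace ℝ X]
    (x : ℕ → X) : ℝ :=
  ⨆ f : {f : X →L[ℝ] ℝ // ‖f‖ ≤ 1}, (∑' j, |f.1 (x j)| ^ q) ^ (1 / q)

/-- Anisotropic `(s,q,r)`-summable sequences. -/
def AnisoSummable (s q r : ℝ) {X : Type*} [NormedAddCommGroup X] [NormedSpace ℝ X]
    (x : ℕ → X) : Prop :=
  ∀ xs : ℕ → X →L[ℝ] ℝ, MemLr r xs →
    (∀ j, Summable fun k => |xs k (x j)| ^ s) ∧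
      Summable fun j => (∑' k, |xs k (x j)| ^ s) ^ (q / s)

/-- The anisotropic `(s,q,r)` norm. -/
noncomputable def anisoNorm (s q r : ℝ) {X : Type*} [NormedAddCommGroup X] [NormedSpace ℝ X]
    (x : ℕ → X) : ℝ :=
  ⨆ xs : {xs : ℕ → X →L[ℝ] ℝ // MemLr r xs ∧ lrNorm r xs ≤ 1},
    (∑' j, (∑' k, |xs.1 k (x j)| ^ s) ^ (q / s)) ^ (1 / q)

/-- Weakly anisotropic `(s,q,r;p)`-summing operators. -/
def WeaklyAnisoSumming (s q r p : ℝ) {U X : Type*} [NormedAddCommGroup U] [NormedSpace ℝ U]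
    [NormedAddCommGroup X] [NormedSpace ℝ X] (T : U →L[ℝ] X) : Prop :=
  ∀ u : ℕ → U, WeaklySummable p u → AnisoSummable s q r fun j => T (u j)


private lemma aux_rpow_summable {r s : ℝ} (hr : 0 < r) (hrs : r ≤ s) (a : ℕ → ℝ)
    (ha : ∀ k, 0 ≤ a k) (h : Summable fun k => a k ^ r) : Summable fun k => a k ^ s := by
  have hs : 0 < s := lt_of_lt_of_le hr hrs
  apply Summable.of_norm_bounded_eventually_nat h
  have hev : ∀ᶠ k in Filter.atTop, a k ^ r ≤ 1 :=
    h.tendsto_atTop_zero.eventually (ge_mem_nhds one_pos)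
  filter_upwards [hev] with k hk
  rw [Real.norm_of_nonneg (Real.rpow_nonneg (ha k) s)]
  rcases eq_or_lt_of_le (ha k) with h0 | h0
  · rw [← h0, Real.zero_rpow hs.ne', Real.zero_rpow hr.ne']
  · have hle : a k ≤ 1 := by
      by_contra hgt
      push_neg at hgt
      exact absurd hk (not_le.mpr ((Real.one_lt_rpow_iff_of_pos h0).mpr (Or.inl ⟨hgt, hr⟩)))
    exact Real.rpow_le_rpow_of_exponent_ge h0 hle hrs

private lemma aux_pt {X : Type*} [NormedAddCommGroup X] [NormedSpace ℝ X] {s : ℝ} (hs : 0 < s)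
    {xs : ℕ → X →L[ℝ] ℝ} (h : Summable fun k => ‖xs k‖ ^ s) (x : X) :
    Summable fun k => |xs k x| ^ s := by
  apply Summable.of_nonneg_of_le (fun k => Real.rpow_nonneg (abs_nonneg _) s)
    (fun k => ?_) (h.mul_right (‖x‖ ^ s))
  calc |xs k x| ^ s ≤ (‖xs k‖ * ‖x‖) ^ s := by
        apply Real.rpow_le_rpow (abs_nonneg _) _ hs.le
        rw [← Real.norm_eq_abs]; exact (xs k).le_opNorm x
    _ = ‖xs k‖ ^ s * ‖x‖ ^ s := Real.mul_rpow (norm_nonneg _) (norm_nonneg _)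

theorem stmt16 {U X : Type*} [NormedAddCommGroup U] [NormedSpace ℝ U] [CompleteSpace U]
    [NormedAddCommGroup X] [NormedSpace ℝ X] [CompleteSpace X]
    {s q r p : ℝ} (hp : 1 ≤ p) (hpq : p ≤ q) (hqs : q < s) (hr : 1 ≤ r) (hrs : r ≤ s)
    (T : U →L[ℝ] X) :
    WeaklyAnisoSumming s q r p T ↔
      ∀ xs : ℕ → X →L[ℝ] ℝ, MemLr r xs → lrNorm r xs ≤ 1 →
        ∀ u : ℕ → U, WeaklySummable p u →
          Summable fun j => (∑' k, |xs k (T (u j))| ^ s) ^ (q / s) := by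
  have hs : (0:ℝ) < s := by linarith
  have hr0 : (0:ℝ) < r := by linarith
  constructor
  · intro h xs hm _ u hu
    exact ((h u hu) xs hm).2
  · intro H u hu xs hm
    have hnorm_s : Summable fun k => ‖xs k‖ ^ s :=
      aux_rpow_summable hr0 hrs _ (fun k => norm_nonneg _) hm
    refine ⟨fun j => aux_pt hs hnorm_s _, ?_⟩
    by_cases hc : lrNorm r xs ≤ 1
    · exact H xs hm hc u hu
    push_neg at hc
    set c := lrNorm r xs with hcdef
    have hc0 : 0 < c := lt_trans one_pos hc
    set ys : ℕ → X →L[ℝ] ℝ := fun k => c⁻¹ • xs k with hysdef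
    have hnys : ∀ k, ‖ys k‖ ^ r = c⁻¹ ^ r * ‖xs k‖ ^ r := by
      intro k
      rw [show ys k = c⁻¹ • xs k from rfl, norm_smul c⁻¹ (xs k), Real.norm_eq_abs,
        abs_of_pos (inv_pos.mpr hc0), Real.mul_rpow (inv_pos.mpr hc0).le (norm_nonneg _)]
    have hmys : MemLr r ys := by
      unfold MemLr
      simp_rw [hnys]
      exact hm.mul_left _
    have hlys : lrNorm r ys ≤ 1 := by
      unfold lrNorm
      simp_rw [hnys, tsum_mul_left]
      rw [Real.mul_rpow (Real.rpow_nonneg (inv_pos.mpr hc0).le r)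
        (tsum_nonneg fun k => Real.rpow_nonneg (norm_nonneg _) r),
        ← Real.rpow_mul (inv_pos.mpr hc0).le, mul_one_div, div_self hr0.ne', Real.rpow_one]
      have : (∑' k, ‖xs k‖ ^ r) ^ (1 / r) = c := rfl
      rw [this, inv_mul_cancel₀ hc0.ne']
    have Hys := H ys hmys hlys u hu
    have key : ∀ j, (∑' k, |xs k (T (u j))| ^ s) ^ (q / s)
        = c ^ q * (∑' k, |ys k (T (u j))| ^ s) ^ (q / s) := by
      intro j
      have h1 : ∀ k, |xs k (T (u j))| ^ s = c ^ s * |ys k (T (u j))| ^ s := by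
        intro k
        have hval : xs k (T (u j)) = c * ys k (T (u j)) := by
          rw [show ys k = c⁻¹ • xs k from rfl]
          simp only [ContinuousLinearMap.smul_apply, smul_eq_mul]
          field_simp
        rw [hval, abs_mul, abs_of_pos hc0, Real.mul_rpow hc0.le (abs_nonneg _)]
      simp_rw [h1, tsum_mul_left]
      rw [Real.mul_rpow (Real.rpow_nonneg hc0.le s)
        (tsum_nonneg fun k => Real.rpow_nonneg (abs_nonneg _) s),
        ← Real.rpow_mul hc0.le]
      congr 2
      field_simp
    simp_rw [key]
    exact Hys.mul_left _
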